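/- Suppose at iteration $k$ of Algorithm 2 the pair $(y_k, \nu_k)$ with $\nu_k \in N_C(y_k)$ satisfies $\|\lambda_k(F_{y_{k-1}}(y_k) + \nu_k) + y_k - x_{k-1}\| \le \hat\sigma \|y_k - y_{k-1}\|$, where $\nu_{k-1} \in N_C(y_{k-1})$. If $\frac{\lambda_k L}{2}\|\lambda_k(F(y_{k-1}) + \nu_{k-1}) + y_{k-1} - x_{k-1}\| \le \theta$, then $\frac{\lambda_k L}{2}\|\lambda_k(F(y_k) + \nu_k) + y_k - x_{k-1}\| \le \hat\theta$, where $\hat\theta = \theta(\frac{\hat\sigma}{1-\hat\sigma} + \frac{\theta}{(1-\hat\sigma)^2})$. -/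

import Mathlib

open scoped RealInnerProductSpace Topology
open Filter

-- PSD of derivative of a monotone map
lemma psd_aux {H : Type*} [NormedAddCommGroup H] [InnerProductSpace ℝ H]
    (F : H → H) (hF : ContDiff ℝ 1 F)
    (hmono : ∀ x y : H, ⟪F x - F y, x - y⟫ ≥ 0) (x v : H) :
    0 ≤ ⟪fderiv ℝ F x v, v⟫ := by
  have hline : HasDerivAt (fun t : ℝ => F (x + t • v)) (fderiv ℝ F x v) 0 := by
    have h1 : HasDerivAt (fun t : ℝ => x + t • v) v 0 := by
      simpa using ((hasDerivAt_id (0:ℝ)).smul_const v).const_add x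
    have h2 : HasFDerivAt F (fderiv ℝ F (x + (0:ℝ) • v)) (x + (0:ℝ) • v) :=
      (hF.differentiable one_ne_zero (x + (0:ℝ) • v)).hasFDerivAt
    have := h2.comp_hasDerivAt 0 h1
    simp only [zero_smul, add_zero] at this
    exact this
  rw [hasDerivAt_iff_tendsto_slope] at hline
  have hsub : 𝓝[>] (0:ℝ) ≤ 𝓝[≠] (0:ℝ) :=
    nhdsWithin_mono _ (fun t ht => ne_of_gt ht)
  have htend : Filter.Tendsto
      (fun t : ℝ => ⟪slope (fun t : ℝ => F (x + t • v)) 0 t, v⟫)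
      (𝓝[>] (0:ℝ)) (𝓝 ⟪fderiv ℝ F x v, v⟫) :=
    ((hline.mono_left hsub).inner tendsto_const_nhds)
  refine ge_of_tendsto htend ?_
  filter_upwards [self_mem_nhdsWithin] with t ht
  have ht0 : (0:ℝ) < t := ht
  have hm := hmono (x + t • v) x
  have hm' : 0 ≤ t * ⟪F (x + t • v) - F x, v⟫ := by
    have : x + t • v - x = t • v := by abel
    rw [this, real_inner_smul_right] at hm
    linarith [hm]
  have hinner : 0 ≤ ⟪F (x + t • v) - F x, v⟫ := nonneg_of_mul_nonneg_right hm' ht0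
  have : slope (fun t : ℝ => F (x + t • v)) 0 t
      = t⁻¹ • (F (x + t • v) - F (x + (0:ℝ) • v)) := by
    simp [slope_def_field, slope, vsub_eq_sub]
  rw [this, real_inner_smul_left]
  simp only [zero_smul, add_zero]
  positivity

-- Taylor / linearization bound
lemma taylor_aux {H : Type*} [NormedAddCommGroup H] [InnerProductSpace ℝ H]
    [CompleteSpace H]
    (F : H → H) (hF : ContDiff ℝ 1 F) (L : ℝ) (hL : 0 < L)
    (hLip : ∀ x y : H, ‖fderiv ℝ F x - fderiv ℝ F y‖ ≤ L * ‖x - y‖)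
    (x y : H) :
    ‖F y - F x - fderiv ℝ F x (y - x)‖ ≤ L / 2 * ‖y - x‖ ^ 2 := by
  set d := y - x with hd
  have hderiv : ∀ t : ℝ, HasDerivAt (fun t : ℝ => F (x + t • d))
      (fderiv ℝ F (x + t • d) d) t := by
    intro t
    have h1 : HasDerivAt (fun t : ℝ => x + t • d) d t := by
      simpa using ((hasDerivAt_id t).smul_const d).const_add x
    exact ((hF.differentiable one_ne_zero (x + t • d)).hasFDerivAt).comp_hasDerivAt t h1
  have hcont : Continuous (fun t : ℝ => fderiv ℝ F (x + t • d) d) := by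
    have h1 : Continuous fun t : ℝ => fderiv ℝ F (x + t • d) :=
      (hF.continuous_fderiv one_ne_zero).comp (by continuity)
    exact h1.clm_apply continuous_const
  have hFTC : F y - F x = ∫ t in (0:ℝ)..1, fderiv ℝ F (x + t • d) d := by
    have := intervalIntegral.integral_eq_sub_of_hasDerivAt
      (f := fun t : ℝ => F (x + t • d)) (f' := fun t => fderiv ℝ F (x + t • d) d)
      (a := 0) (b := 1) (fun t _ => hderiv t)
      (hcont.intervalIntegrable 0 1)
    rw [this]
    simp [hd]
  have hconstint : (fderiv ℝ F x d : H) = ∫ t in (0:ℝ)..1, fderiv ℝ F x d := by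
    simp
  have hkey : F y - F x - fderiv ℝ F x d
      = ∫ t in (0:ℝ)..1, (fderiv ℝ F (x + t • d) d - fderiv ℝ F x d) := by
    rw [hFTC, hconstint, ← intervalIntegral.integral_sub
      (hcont.intervalIntegrable 0 1) (intervalIntegrable_const)]
    simp
  rw [hkey]
  have hval : (∫ t in (0:ℝ)..1, (L * ‖d‖ ^ 2) * t) = L / 2 * ‖d‖ ^ 2 := by
    rw [intervalIntegral.integral_const_mul, integral_id]
    ring
  have hbound : ‖∫ t in (0:ℝ)..1, (fderiv ℝ F (x + t • d) d - fderiv ℝ F x d)‖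
      ≤ |∫ t in (0:ℝ)..1, (L * ‖d‖ ^ 2) * t| := by
    apply intervalIntegral.norm_integral_le_abs_of_norm_le
    · filter_upwards [MeasureTheory.ae_restrict_mem measurableSet_Ioc] with t ht
      rw [Set.uIoc_of_le (by norm_num : (0:ℝ) ≤ 1)] at ht
      have ht0 : 0 < t := ht.1
      calc ‖fderiv ℝ F (x + t • d) d - fderiv ℝ F x d‖
          = ‖(fderiv ℝ F (x + t • d) - fderiv ℝ F x) d‖ := by simp
        _ ≤ ‖fderiv ℝ F (x + t • d) - fderiv ℝ F x‖ * ‖d‖ :=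
            ContinuousLinearMap.le_opNorm _ _
        _ ≤ (L * ‖x + t • d - x‖) * ‖d‖ := by
            have := hLip (x + t • d) x
            exact mul_le_mul_of_nonneg_right this (norm_nonneg d)
        _ = (L * ‖d‖ ^ 2) * t := by
            have : x + t • d - x = t • d := by abel
            rw [this, norm_smul, Real.norm_of_nonneg ht0.le]
            ring
    · exact (continuous_const.mul continuous_id).intervalIntegrable 0 1
  rw [hval, abs_of_nonneg (by positivity)] at hbound
  exact hbound

theorem stmt_7 {H : Type*} [NormedAddCommGroup H] [InnerProductSpace ℝ H]
    [CompleteSpace H]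
    (C : Set H) (hC : IsClosed C) (hconv : Convex ℝ C)
    (F : H → H) (hF : ContDiff ℝ 1 F)
    (hmono : ∀ x y : H, ⟪F x - F y, x - y⟫ ≥ 0)
    (L : ℝ) (hL : 0 < L)
    (hLip : ∀ x y : H, ‖fderiv ℝ F x - fderiv ℝ F y‖ ≤ L * ‖x - y‖)
    (σh θ θh : ℝ) (hσ0 : 0 ≤ σh) (hσ1 : σh < 1/2)
    (hθ0 : 0 < θ) (hθub : θ < (1 - σh) * (1 - 2*σh))
    (hθh : θh = θ * (σh / (1 - σh) + θ / (1 - σh)^2))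
    (lam : ℝ) (hlam : 0 < lam)
    (xm ym yk νm νk : H) (hym : ym ∈ C) (hyk : yk ∈ C)
    (hνm : ∀ z ∈ C, ⟪νm, z - ym⟫ ≤ 0) (hνk : ∀ z ∈ C, ⟪νk, z - yk⟫ ≤ 0)
    (herr : ‖lam • (F ym + fderiv ℝ F ym (yk - ym) + νk) + yk - xm‖ ≤
      σh * ‖yk - ym‖)
    (hprem : lam * L / 2 * ‖lam • (F ym + νm) + ym - xm‖ ≤ θ) :
    lam * L / 2 * ‖lam • (F yk + νk) + yk - xm‖ ≤ θh := by
  set d : H := yk - ym with hdd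
  set e : H := lam • (F ym + fderiv ℝ F ym d + νk) + yk - xm with he
  set w : H := lam • (F ym + νm) + ym - xm with hw
  set a : ℝ := ‖d‖ with ha
  -- normal cone monotonicity
  have hnc : 0 ≤ ⟪νk - νm, d⟫ := by
    have h1 := hνk ym hym
    have h2 := hνm yk hyk
    simp only [hdd, inner_sub_left, inner_sub_right] at *
    linarith
  have hpsd : 0 ≤ ⟪fderiv ℝ F ym d, d⟫ := psd_aux F hF hmono ym d
  -- identity e - w
  have hid : e - w = lam • (fderiv ℝ F ym d) + lam • (νk - νm) + d := by
    simp only [he, hw, hdd]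
    module
  have hinner : ⟪e - w, d⟫ = lam * ⟪fderiv ℝ F ym d, d⟫ + lam * ⟪νk - νm, d⟫ + ‖d‖ ^ 2 := by
    rw [hid, inner_add_left, inner_add_left, real_inner_smul_left,
      real_inner_smul_left, real_inner_self_eq_norm_sq]
  have hub : ⟪e - w, d⟫ ≤ (σh * a + ‖w‖) * a := by
    calc ⟪e - w, d⟫ ≤ ‖e - w‖ * ‖d‖ := real_inner_le_norm _ _
      _ ≤ (‖e‖ + ‖w‖) * a := by
          apply mul_le_mul_of_nonneg_right (norm_sub_le _ _) (norm_nonneg d)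
      _ ≤ (σh * a + ‖w‖) * a := by
          apply mul_le_mul_of_nonneg_right _ (norm_nonneg d)
          exact add_le_add_left herr _
  have hsq : a ^ 2 ≤ σh * a ^ 2 + ‖w‖ * a := by nlinarith [hinner, hub, mul_nonneg hlam.le hpsd, mul_nonneg hlam.le hnc]
  have hstep : (1 - σh) * a ≤ ‖w‖ := by
    rcases eq_or_lt_of_le (norm_nonneg d) with h0 | h0
    · rw [ha, ← h0]; simp [norm_nonneg]
    · have := hsq
      nlinarith
  -- Taylor bound
  have htay : ‖F yk - F ym - fderiv ℝ F ym d‖ ≤ L / 2 * a ^ 2 := by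
    have := taylor_aux F hF L hL hLip ym yk
    simpa [hdd, ha] using this
  have hid2 : lam • (F yk + νk) + yk - xm = e + lam • (F yk - F ym - fderiv ℝ F ym d) := by
    simp only [he, hdd]
    module
  have hnorm : ‖lam • (F yk + νk) + yk - xm‖ ≤ σh * a + lam * (L / 2 * a ^ 2) := by
    rw [hid2]
    calc ‖e + lam • (F yk - F ym - fderiv ℝ F ym d)‖
        ≤ ‖e‖ + ‖lam • (F yk - F ym - fderiv ℝ F ym d)‖ := norm_add_le _ _
      _ ≤ σh * a + lam * (L / 2 * a ^ 2) := by
          rw [norm_smul, Real.norm_of_nonneg hlam.le]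
          exact add_le_add herr (mul_le_mul_of_nonneg_left htay hlam.le)
  -- conclusion
  have hT : 0 < lam * L / 2 := by positivity
  set u : ℝ := lam * L / 2 * a with hu
  have hu0 : 0 ≤ u := mul_nonneg hT.le (norm_nonneg d)
  have hu1 : (1 - σh) * u ≤ θ := by
    have := mul_le_mul_of_nonneg_left hstep hT.le
    calc (1 - σh) * u = lam * L / 2 * ((1 - σh) * a) := by rw [hu]; ring
      _ ≤ lam * L / 2 * ‖w‖ := this
      _ ≤ θ := hprem
  have hfin : lam * L / 2 * ‖lam • (F yk + νk) + yk - xm‖ ≤ σh * u + u ^ 2 := by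
    calc lam * L / 2 * ‖lam • (F yk + νk) + yk - xm‖
        ≤ lam * L / 2 * (σh * a + lam * (L / 2 * a ^ 2)) :=
          mul_le_mul_of_nonneg_left hnorm hT.le
      _ = σh * u + u ^ 2 := by rw [hu]; ring
  have hσ' : 0 < 1 - σh := by linarith
  have h2 : u ≤ θ / (1 - σh) := (le_div_iff₀ hσ').mpr (by linarith [hu1])
  have h3 : σh * u ≤ σh * (θ / (1 - σh)) := mul_le_mul_of_nonneg_left h2 hσ0
  have h4 : u ^ 2 ≤ (θ / (1 - σh)) ^ 2 := by
    apply pow_le_pow_left₀ hu0 h2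
  have : σh * u + u ^ 2 ≤ θh := by
    calc σh * u + u ^ 2 ≤ σh * (θ / (1 - σh)) + (θ / (1 - σh)) ^ 2 := add_le_add h3 h4
      _ = θh := by rw [hθh]; field_simp
  linarith
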